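/- Let C ⊆ ℝ^m be a cone with vertex at the origin (t·x ∈ C whenever x ∈ C, t ≥ 0), and suppose there exists λ ≥ 1 such that d_C(v,w) ≤ λ‖v-w‖ for all unit vectors v, w ∈ C. Then d_C(x,y) ≤ (1+λ)‖x-y‖ for all x, y ∈ C, i.e., C is Lipschitz normally embedded. -/

import Mathlib

open Set Filter Metric
open scoped NNReal ENNReal

/-- Length of a path `γ : [0,1] → E` measured via the (extended) variation. -/
noncomputable def pathLength {E : Type*} [NormedAddCommGroup E] (γ : ℝ → E) : ENNReal :=
  eVariationOn γ (Set.Icc 0 1)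

/-- `γ` is a path in `X` from `x` to `y`, parametrized on `[0,1]`. -/
def IsPathIn {E : Type*} [NormedAddCommGroup E] (X : Set E) (x y : E) (γ : ℝ → E) : Prop :=
  ContinuousOn γ (Set.Icc 0 1) ∧ Set.MapsTo γ (Set.Icc 0 1) X ∧ γ 0 = x ∧ γ 1 = y

/-- The inner (length) distance on `X`: the infimum of the lengths of paths in `X`
joining `x` to `y`. -/
noncomputable def innerDist {E : Type*} [NormedAddCommGroup E] (X : Set E) (x y : E) : ENNReal :=
  ⨅ γ ∈ {γ : ℝ → E | IsPathIn X x y γ}, pathLength γ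

section Aux

variable {E : Type*} [NormedAddCommGroup E]

lemma innerDist_le_pathLength {X : Set E} {x y : E} {γ : ℝ → E} (h : IsPathIn X x y γ) :
    innerDist X x y ≤ pathLength γ :=
  iInf₂_le γ h

lemma eVariationOn_id_Icc' : eVariationOn (id : ℝ → ℝ) (Set.Icc 0 1) ≤ 1 := by
  have h := MonotoneOn.eVariationOn_le (f := (id : ℝ → ℝ)) (s := Set.Icc (0 : ℝ) 1)
      (monotone_id.monotoneOn _) (a := 0) (b := 1)
      (by constructor <;> norm_num) (by constructor <;> norm_num)
  simpa using h

lemma pathLength_le_of_lipschitzOnWith {γ : ℝ → E} {K : ℝ≥0}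
    (h : LipschitzOnWith K γ (Set.Icc 0 1)) : pathLength γ ≤ (K : ℝ≥0∞) := by
  have h1 : eVariationOn (γ ∘ (id : ℝ → ℝ)) (Set.Icc 0 1)
      ≤ (K : ℝ≥0∞) * eVariationOn (id : ℝ → ℝ) (Set.Icc 0 1) :=
    h.comp_eVariationOn_le (Set.mapsTo_id _)
  calc pathLength γ = eVariationOn (γ ∘ (id : ℝ → ℝ)) (Set.Icc 0 1) := rfl
    _ ≤ (K : ℝ≥0∞) * eVariationOn (id : ℝ → ℝ) (Set.Icc 0 1) := h1
    _ ≤ (K : ℝ≥0∞) * 1 := mul_le_mul_right eVariationOn_id_Icc' _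
    _ = (K : ℝ≥0∞) := mul_one _

lemma ContinuousOn.union_of_isClosed' {α β : Type*} [TopologicalSpace α] [TopologicalSpace β]
    {f : α → β} {s t : Set α} (hf : ContinuousOn f s) (hg : ContinuousOn f t)
    (hs : IsClosed s) (ht : IsClosed t) : ContinuousOn f (s ∪ t) := by
  intro x hx
  apply ContinuousWithinAt.union
  · rcases Classical.em (x ∈ s) with h | h
    · exact hf x h
    · exact continuousWithinAt_of_notMem_closure (by rwa [hs.closure_eq])
  · rcases Classical.em (x ∈ t) with h | h
    · exact hg x h
    · exact continuousWithinAt_of_notMem_closure (by rwa [ht.closure_eq])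

variable [NormedSpace ℝ E]

/-- A radial path along the ray through `x`. -/
lemma innerDist_segment {X : Set E} {x : E}
    (hX : ∀ t : ℝ, 0 ≤ t → t • x ∈ X) {c d : ℝ} (hc : 0 ≤ c) (hd : 0 ≤ d) :
    innerDist X (c • x) (d • x) ≤ ENNReal.ofReal (|d - c| * ‖x‖) := by
  set γ : ℝ → E := fun t => (c + t * (d - c)) • x with hγ
  have hlip : LipschitzWith (|d - c| * ‖x‖).toNNReal γ := by
    apply LipschitzWith.of_dist_le_mul
    intro s t
    have key : γ s - γ t = ((s - t) * (d - c)) • x := by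
      simp only [hγ, ← sub_smul]
      congr 1
      ring
    rw [dist_eq_norm, key, norm_smul, Real.coe_toNNReal _ (by positivity), Real.dist_eq,
      Real.norm_eq_abs, abs_mul]
    exact le_of_eq (by ring)
  have hcont : Continuous γ := by
    apply Continuous.smul _ continuous_const
    exact continuous_const.add (continuous_id.mul continuous_const)
  have hmaps : Set.MapsTo γ (Set.Icc 0 1) X := by
    intro t ht
    have h0 : 0 ≤ c + t * (d - c) := by
      nlinarith [mul_nonneg ht.1 hd, mul_nonneg (sub_nonneg.2 ht.2) hc]
    exact hX _ h0
  have h0 : γ 0 = c • x := by simp [hγ]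
  have h1 : γ 1 = d • x := by
    have : c + 1 * (d - c) = d := by ring
    simp only [hγ, this]
  have hpath : IsPathIn X (c • x) (d • x) γ := ⟨hcont.continuousOn, hmaps, h0, h1⟩
  refine (innerDist_le_pathLength hpath).trans ?_
  refine (pathLength_le_of_lipschitzOnWith (hlip.lipschitzOnWith (s := Set.Icc 0 1))).trans ?_
  exact le_of_eq rfl

/-- Scaling paths: the inner distance scales (sub)linearly under dilations of a cone. -/
lemma innerDist_smul_le {X : Set E} (hX : ∀ x ∈ X, ∀ t : ℝ, 0 ≤ t → t • x ∈ X)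
    {r : ℝ} (hr : 0 < r) (v w : E) :
    innerDist X (r • v) (r • w) ≤ ENNReal.ofReal r * innerDist X v w := by
  have h0 : (ENNReal.ofReal r) ≠ 0 := by
    simp only [ne_eq, ENNReal.ofReal_eq_zero, not_le]
    exact hr
  have htop : (ENNReal.ofReal r) ≠ ⊤ := ENNReal.ofReal_ne_top
  conv_rhs => rw [innerDist]
  rw [ENNReal.mul_iInf_of_ne h0 htop]
  refine le_iInf fun γ => ?_
  rw [ENNReal.mul_iInf_of_ne h0 htop]
  refine le_iInf fun hγ => ?_
  obtain ⟨hcont, hmaps, hγ0, hγ1⟩ := hγ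
  have hpath : IsPathIn X (r • v) (r • w) (fun t => r • γ t) := by
    refine ⟨hcont.const_smul r, fun t ht => hX _ (hmaps ht) r hr.le, ?_, ?_⟩
    · simp [hγ0]
    · simp [hγ1]
  refine (innerDist_le_pathLength hpath).trans ?_
  have hb : eVariationOn ((r • ·) ∘ γ) (Set.Icc 0 1)
      ≤ (‖r‖₊ : ℝ≥0∞) * eVariationOn γ (Set.Icc 0 1) :=
    ((lipschitzWith_smul (β := E) r).lipschitzOnWith (s := Set.univ)).comp_eVariationOn_le
      (Set.mapsTo_univ γ _)
  have hcoe : (‖r‖₊ : ℝ≥0∞) = ENNReal.ofReal r := (Real.enorm_eq_ofReal hr.le)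
  rw [hcoe] at hb
  exact hb

/-- Concatenation of paths: the inner distance is bounded by the sum of two path lengths. -/
lemma innerDist_le_concat {X : Set E} {x z y : E} {γ₁ γ₂ : ℝ → E}
    (h₁ : IsPathIn X x z γ₁) (h₂ : IsPathIn X z y γ₂) :
    innerDist X x y ≤ pathLength γ₁ + pathLength γ₂ := by
  classical
  obtain ⟨c₁, m₁, e₁0, e₁1⟩ := h₁
  obtain ⟨c₂, m₂, e₂0, e₂1⟩ := h₂
  set γ : ℝ → E := fun t => if t ≤ 1 / 2 then γ₁ (2 * t) else γ₂ (2 * t - 1) with hγ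
  have heq1 : Set.EqOn γ (fun t => γ₁ (2 * t)) (Set.Icc 0 (1 / 2 : ℝ)) := fun t ht =>
    if_pos ht.2
  have heq2 : Set.EqOn γ (fun t => γ₂ (2 * t - 1)) (Set.Icc (1 / 2 : ℝ) 1) := by
    intro t ht
    by_cases h : t ≤ 1 / 2
    · have htt : t = 1 / 2 := le_antisymm h ht.1
      subst htt
      simp only [hγ, if_pos le_rfl]
      norm_num [e₁1, e₂0]
    · exact if_neg h
  have maps1 : Set.MapsTo (fun t : ℝ => 2 * t) (Set.Icc (0 : ℝ) (1 / 2)) (Set.Icc (0 : ℝ) 1) := by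
    intro t ht
    simp only [Set.mem_Icc] at ht ⊢
    constructor <;> linarith
  have maps2 : Set.MapsTo (fun t : ℝ => 2 * t - 1) (Set.Icc (1 / 2 : ℝ) 1)
      (Set.Icc (0 : ℝ) 1) := by
    intro t ht
    simp only [Set.mem_Icc] at ht ⊢
    constructor <;> linarith
  have cont1 : ContinuousOn γ (Set.Icc 0 (1 / 2 : ℝ)) :=
    (c₁.comp (continuous_const.mul continuous_id).continuousOn maps1).congr heq1
  have cont2 : ContinuousOn γ (Set.Icc (1 / 2 : ℝ) 1) :=
    (c₂.comp ((continuous_const.mul continuous_id).sub continuous_const).continuousOn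
      maps2).congr heq2
  have hunion : Set.Icc (0 : ℝ) 1 = Set.Icc 0 (1 / 2) ∪ Set.Icc (1 / 2) 1 :=
    (Set.Icc_union_Icc_eq_Icc (by norm_num) (by norm_num)).symm
  have contγ : ContinuousOn γ (Set.Icc 0 1) := by
    rw [hunion]
    exact ContinuousOn.union_of_isClosed' cont1 cont2 isClosed_Icc isClosed_Icc
  have mapsγ : Set.MapsTo γ (Set.Icc 0 1) X := by
    intro t ht
    by_cases h : t ≤ 1 / 2
    · simp only [hγ, if_pos h]
      exact m₁ ⟨by linarith [ht.1], by linarith⟩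
    · simp only [hγ, if_neg h]
      push_neg at h
      exact m₂ ⟨by linarith, by linarith [ht.2]⟩
  have hγ0 : γ 0 = x := by
    simp only [hγ]
    norm_num [e₁0]
  have hγ1 : γ 1 = y := by
    simp only [hγ]
    norm_num [e₂1]
  have hlen : pathLength γ ≤ pathLength γ₁ + pathLength γ₂ := by
    have key := eVariationOn.Icc_add_Icc γ (s := Set.Icc (0 : ℝ) 1) (a := 0) (b := 1 / 2)
        (c := 1) (by norm_num) (by norm_num) (by constructor <;> norm_num)
    have i1 : Set.Icc (0 : ℝ) 1 ∩ Set.Icc 0 (1 / 2) = Set.Icc 0 (1 / 2) :=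
      Set.inter_eq_right.2 (Set.Icc_subset_Icc le_rfl (by norm_num))
    have i2 : Set.Icc (0 : ℝ) 1 ∩ Set.Icc (1 / 2) 1 = Set.Icc (1 / 2) 1 :=
      Set.inter_eq_right.2 (Set.Icc_subset_Icc (by norm_num) le_rfl)
    have i3 : Set.Icc (0 : ℝ) 1 ∩ Set.Icc 0 1 = Set.Icc 0 1 := Set.inter_self _
    rw [i1, i2, i3] at key
    rw [pathLength, ← key]
    have mono1 : MonotoneOn (fun t : ℝ => 2 * t) (Set.Icc (0 : ℝ) (1 / 2)) := by
      intro s hs t ht hst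
      dsimp only
      linarith
    have mono2 : MonotoneOn (fun t : ℝ => 2 * t - 1) (Set.Icc (1 / 2 : ℝ) 1) := by
      intro s hs t ht hst
      dsimp only
      linarith
    gcongr
    · calc eVariationOn γ (Set.Icc 0 (1 / 2))
          = eVariationOn (γ₁ ∘ (fun t : ℝ => 2 * t)) (Set.Icc 0 (1 / 2)) :=
            eVariationOn.eq_of_eqOn heq1
        _ ≤ eVariationOn γ₁ (Set.Icc 0 1) :=
            eVariationOn.comp_le_of_monotoneOn _ _ mono1 maps1
    · calc eVariationOn γ (Set.Icc (1 / 2) 1)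
          = eVariationOn (γ₂ ∘ (fun t : ℝ => 2 * t - 1)) (Set.Icc (1 / 2) 1) :=
            eVariationOn.eq_of_eqOn heq2
        _ ≤ eVariationOn γ₂ (Set.Icc 0 1) :=
            eVariationOn.comp_le_of_monotoneOn _ _ mono2 maps2
  exact (innerDist_le_pathLength ⟨contγ, mapsγ, hγ0, hγ1⟩).trans hlen

lemma innerDist_triangle (X : Set E) (x z y : E) :
    innerDist X x y ≤ innerDist X x z + innerDist X z y := by
  calc innerDist X x y
      ≤ ⨅ γ₁ ∈ {γ : ℝ → E | IsPathIn X x z γ}, ⨅ γ₂ ∈ {γ : ℝ → E | IsPathIn X z y γ},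
          (pathLength γ₁ + pathLength γ₂) := by
        refine le_iInf₂ fun γ₁ h₁ => le_iInf₂ fun γ₂ h₂ => ?_
        exact innerDist_le_concat h₁ h₂
    _ = innerDist X x z + innerDist X z y := by
        rw [innerDist, innerDist]
        simp_rw [ENNReal.iInf_add, ENNReal.add_iInf]

end Aux

lemma key_norm_ineq {F : Type*} [NormedAddCommGroup F] [InnerProductSpace ℝ F]
    {u v : F} (hu : ‖u‖ = 1) (hv : ‖v‖ = 1) {a b : ℝ} (ha : 0 < a) (hb : 0 < b) :
    ‖(min a b) • u - (min a b) • v‖ ≤ ‖a • u - b • v‖ := by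
  set m0 := min a b with hm0
  have hm0a : m0 ≤ a := min_le_left _ _
  have hm0b : m0 ≤ b := min_le_right _ _
  have hm0pos : 0 < m0 := lt_min ha hb
  set s : ℝ := inner ℝ u v with hs
  have hs1 : s ≤ 1 := by
    have h := real_inner_le_norm u v
    rwa [hu, hv, one_mul] at h
  have hL : ‖m0 • u - m0 • v‖ ^ 2 = 2 * m0 ^ 2 - 2 * m0 ^ 2 * s := by
    rw [norm_sub_sq_real, norm_smul, norm_smul, real_inner_smul_left, real_inner_smul_right,
      hu, hv, Real.norm_eq_abs, abs_of_pos hm0pos, ← hs]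
    ring
  have hR : ‖a • u - b • v‖ ^ 2 = a ^ 2 - 2 * (a * b) * s + b ^ 2 := by
    rw [norm_sub_sq_real, norm_smul, norm_smul, real_inner_smul_left, real_inner_smul_right,
      hu, hv, Real.norm_eq_abs, Real.norm_eq_abs, abs_of_pos ha, abs_of_pos hb, ← hs]
    ring
  have hprod : (0 : ℝ) ≤ a * b - m0 * m0 :=
    sub_nonneg.2 (mul_le_mul hm0a hm0b hm0pos.le ha.le)
  have h2 : ‖m0 • u - m0 • v‖ ^ 2 ≤ ‖a • u - b • v‖ ^ 2 := by
    rw [hL, hR]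
    nlinarith [mul_nonneg (sub_nonneg.2 hs1) hprod, sq_nonneg (a - b)]
  nlinarith [h2, norm_nonneg (m0 • u - m0 • v), norm_nonneg (a • u - b • v)]

/-- a cone whose inner metric is `lam`-Lipschitz comparable to the outer
metric on unit vectors is Lipschitz normally embedded with constant `1 + lam`. -/
theorem stmt7 {m : ℕ} (C : Set (EuclideanSpace ℝ (Fin m)))
    (hcone : ∀ x ∈ C, ∀ t : ℝ, 0 ≤ t → t • x ∈ C)
    (lam : ℝ) (hlam : 1 ≤ lam)
    (hunit : ∀ v ∈ C, ∀ w ∈ C, ‖v‖ = 1 → ‖w‖ = 1 →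
      innerDist C v w ≤ ENNReal.ofReal (lam * ‖v - w‖)) :
    ∀ x ∈ C, ∀ y ∈ C, innerDist C x y ≤ ENNReal.ofReal ((1 + lam) * ‖x - y‖) := by
  intro x hx y hy
  rcases eq_or_ne x 0 with rfl | hx0
  · -- x = 0 : use the radial path from 0 to y
    have h := innerDist_segment (X := C) (x := y) (fun t ht => hcone y hy t ht)
      (le_refl (0 : ℝ)) zero_le_one
    rw [zero_smul, one_smul] at h
    refine h.trans (ENNReal.ofReal_le_ofReal ?_)
    rw [zero_sub, norm_neg]
    have h1 : |(1:ℝ) - 0| = 1 := by norm_num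
    rw [h1, one_mul]
    nlinarith [norm_nonneg y]
  rcases eq_or_ne y 0 with rfl | hy0
  · -- y = 0 : use the radial path from x to 0
    have h := innerDist_segment (X := C) (x := x) (fun t ht => hcone x hx t ht)
      zero_le_one (le_refl (0 : ℝ))
    rw [zero_smul, one_smul] at h
    refine h.trans (ENNReal.ofReal_le_ofReal ?_)
    rw [sub_zero]
    have h1 : |(0:ℝ) - 1| = 1 := by norm_num
    rw [h1, one_mul]
    nlinarith [norm_nonneg x]
  -- main case
  have ha : 0 < ‖x‖ := norm_pos_iff.2 hx0
  have hb : 0 < ‖y‖ := norm_pos_iff.2 hy0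
  set a := ‖x‖ with hadef
  set b := ‖y‖ with hbdef
  set m0 := min a b with hm0def
  have hm0pos : 0 < m0 := lt_min ha hb
  have hm0a : m0 ≤ a := min_le_left _ _
  have hm0b : m0 ≤ b := min_le_right _ _
  set u : EuclideanSpace ℝ (Fin m) := a⁻¹ • x with hudef
  set v : EuclideanSpace ℝ (Fin m) := b⁻¹ • y with hvdef
  have hu : u ∈ C := hcone x hx _ (inv_nonneg.2 ha.le)
  have hv : v ∈ C := hcone y hy _ (inv_nonneg.2 hb.le)
  have hnu : ‖u‖ = 1 := by
    rw [hudef, norm_smul, Real.norm_eq_abs, abs_of_pos (inv_pos.2 ha)]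
    field_simp
    exact hadef.symm
  have hnv : ‖v‖ = 1 := by
    rw [hvdef, norm_smul, Real.norm_eq_abs, abs_of_pos (inv_pos.2 hb)]
    field_simp
    exact hbdef.symm
  have hxu : x = a • u := by
    rw [hudef, smul_inv_smul₀ ha.ne']
  have hyv : y = b • v := by
    rw [hvdef, smul_inv_smul₀ hb.ne']
  have huc : ∀ t : ℝ, 0 ≤ t → t • u ∈ C := fun t ht => hcone u hu t ht
  have hvc : ∀ t : ℝ, 0 ≤ t → t • v ∈ C := fun t ht => hcone v hv t ht
  -- first leg : from x = a • u to m0 • u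
  have d1 : innerDist C x (m0 • u) ≤ ENNReal.ofReal (a - m0) := by
    have h := innerDist_segment (X := C) (x := u) huc ha.le hm0pos.le
    rw [← hxu, hnu, mul_one, abs_sub_comm, abs_of_nonneg (sub_nonneg.2 hm0a)] at h
    exact h
  -- third leg : from m0 • v to y = b • v
  have d3 : innerDist C (m0 • v) y ≤ ENNReal.ofReal (b - m0) := by
    have h := innerDist_segment (X := C) (x := v) hvc hm0pos.le hb.le
    rw [← hyv, hnv, mul_one, abs_of_nonneg (sub_nonneg.2 hm0b)] at h
    exact h
  -- middle leg : between the two points of norm m0, by scaling the unit-sphere path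
  have d2 : innerDist C (m0 • u) (m0 • v) ≤ ENNReal.ofReal (lam * (m0 * ‖u - v‖)) := by
    calc innerDist C (m0 • u) (m0 • v)
        ≤ ENNReal.ofReal m0 * innerDist C u v := innerDist_smul_le hcone hm0pos u v
      _ ≤ ENNReal.ofReal m0 * ENNReal.ofReal (lam * ‖u - v‖) :=
          mul_le_mul_right (hunit u hu v hv hnu hnv) _
      _ = ENNReal.ofReal (m0 * (lam * ‖u - v‖)) := (ENNReal.ofReal_mul hm0pos.le).symm
      _ = ENNReal.ofReal (lam * (m0 * ‖u - v‖)) := by ring_nf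
  -- the key geometric inequality
  have hkey : m0 * ‖u - v‖ ≤ ‖x - y‖ := by
    have h1 : m0 * ‖u - v‖ = ‖m0 • u - m0 • v‖ := by
      rw [← smul_sub, norm_smul, Real.norm_eq_abs, abs_of_pos hm0pos]
    have h2 : ‖m0 • u - m0 • v‖ ≤ ‖a • u - b • v‖ := key_norm_ineq hnu hnv ha hb
    rw [h1, hxu, hyv]
    exact h2
  -- |a - b| ≤ ‖x - y‖
  have habs : |a - b| ≤ ‖x - y‖ := by
    rw [hadef, hbdef]
    exact abs_norm_sub_norm_le x y
  -- put everything together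
  have T : innerDist C x y ≤ innerDist C x (m0 • u) +
      (innerDist C (m0 • u) (m0 • v) + innerDist C (m0 • v) y) :=
    (innerDist_triangle C x (m0 • u) y).trans
      (add_le_add_right (innerDist_triangle C (m0 • u) (m0 • v) y) _)
  refine T.trans ?_
  have h01 : (0:ℝ) ≤ a - m0 := sub_nonneg.2 hm0a
  have h02 : (0:ℝ) ≤ b - m0 := sub_nonneg.2 hm0b
  have h03 : (0:ℝ) ≤ lam * (m0 * ‖u - v‖) :=
    mul_nonneg (by linarith) (mul_nonneg hm0pos.le (norm_nonneg _))
  calc innerDist C x (m0 • u) +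
      (innerDist C (m0 • u) (m0 • v) + innerDist C (m0 • v) y)
      ≤ ENNReal.ofReal (a - m0) +
        (ENNReal.ofReal (lam * (m0 * ‖u - v‖)) + ENNReal.ofReal (b - m0)) :=
        add_le_add d1 (add_le_add d2 d3)
    _ = ENNReal.ofReal ((a - m0) + (lam * (m0 * ‖u - v‖) + (b - m0))) := by
        rw [ENNReal.ofReal_add h01 (add_nonneg h03 h02), ENNReal.ofReal_add h03 h02]
    _ ≤ ENNReal.ofReal ((1 + lam) * ‖x - y‖) := by
        apply ENNReal.ofReal_le_ofReal
        have hab : (a - m0) + (b - m0) = |a - b| := by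
          rcases le_total a b with h | h
          · rw [hm0def, min_eq_left h, abs_of_nonpos (by linarith : a - b ≤ 0)]
            ring
          · rw [hm0def, min_eq_right h, abs_of_nonneg (by linarith : 0 ≤ a - b)]
            ring
        have hmul : lam * (m0 * ‖u - v‖) ≤ lam * ‖x - y‖ :=
          mul_le_mul_of_nonneg_left hkey (by linarith)
        nlinarith [hab, habs, hmul]
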